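/- Fix K > 0, σ > 0, τ > 0 and r ∈ ℝ, and define the Black–Scholes call price as a function of the spot S > 0 by C(S) = S·Φ(d₁(S)) − K·e^{−rτ}·Φ(d₂(S)), where d₁(S) = (ln(S/K) + (r + σ²/2)τ)/(σ√τ) and d₂(S) = d₁(S) − σ√τ. Then for every S > 0 the derivative function S ↦ Φ(d₁(S)) is itself differentiable at S with derivative φ_N(d₁(S))/(S·σ·√τ); that is, the gamma of a European call equals N′(d₁)/(Sσ√τ). -/

import Mathlib

open Set

/-- The standard normal cumulative distribution function. -/
noncomputable def stdNormalCDF (x : ℝ) : ℝ :=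
  (Real.sqrt (2 * Real.pi))⁻¹ * ∫ t in Iic x, Real.exp (-t ^ 2 / 2)

/-- The standard normal probability density function. -/
noncomputable def stdNormalPDF (x : ℝ) : ℝ :=
  (Real.sqrt (2 * Real.pi))⁻¹ * Real.exp (-x ^ 2 / 2)

lemma gauss_integrable : MeasureTheory.Integrable (fun t : ℝ => Real.exp (-t ^ 2 / 2)) := by
  have := integrable_exp_neg_mul_sq (b := (1/2 : ℝ)) (by norm_num)
  convert this using 2 with t
  ring_nf

lemma stdNormalCDF_hasDerivAt (x : ℝ) : HasDerivAt stdNormalCDF (stdNormalPDF x) x := by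
  have hcont : Continuous fun t : ℝ => Real.exp (-t ^ 2 / 2) := by continuity
  have h1 : HasDerivAt (fun u : ℝ => ∫ t in (0:ℝ)..u, Real.exp (-t ^ 2 / 2))
      (Real.exp (-x ^ 2 / 2)) x := (hcont.integral_hasStrictDerivAt 0 x).hasDerivAt
  have key : ∀ u : ℝ, (∫ t in Iic u, Real.exp (-t ^ 2 / 2))
      = (∫ t in Iic (0:ℝ), Real.exp (-t ^ 2 / 2)) + ∫ t in (0:ℝ)..u, Real.exp (-t ^ 2 / 2) := by
    intro u
    have h := intervalIntegral.integral_Iic_sub_Iic (μ := MeasureTheory.volume)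
      (a := (0:ℝ)) (b := u) gauss_integrable.integrableOn gauss_integrable.integrableOn
    linarith
  have h2 : HasDerivAt (fun u : ℝ => ∫ t in Iic u, Real.exp (-t ^ 2 / 2))
      (Real.exp (-x ^ 2 / 2)) x := by
    have := ((hasDerivAt_const x (∫ t in Iic (0:ℝ), Real.exp (-t ^ 2 / 2))).add h1)
    rw [show (fun u : ℝ => ∫ t in Iic u, Real.exp (-t ^ 2 / 2)) = (fun u : ℝ => (∫ t in Iic (0:ℝ), Real.exp (-t ^ 2 / 2)) + ∫ t in (0:ℝ)..u, Real.exp (-t ^ 2 / 2)) from funext key]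
    exact this.congr_deriv (zero_add _)
  have := h2.const_mul (Real.sqrt (2 * Real.pi))⁻¹
  unfold stdNormalCDF stdNormalPDF
  simpa [mul_comm] using this

/-- Gamma of a European call: the derivative of the delta `S ↦ Φ(d₁(S))` with respect to
the spot `S` equals `φ_N(d₁(S)) / (S σ √τ)`. -/
theorem black_scholes_gamma (K σ τ r : ℝ) (hK : 0 < K) (hσ : 0 < σ) (hτ : 0 < τ)
    (S : ℝ) (hS : 0 < S) :
    HasDerivAt
      (fun s : ℝ =>
        stdNormalCDF ((Real.log (s / K) + (r + σ ^ 2 / 2) * τ) / (σ * Real.sqrt τ)))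
      (stdNormalPDF ((Real.log (S / K) + (r + σ ^ 2 / 2) * τ) / (σ * Real.sqrt τ))
        / (S * σ * Real.sqrt τ)) S := by
  have hst : 0 < σ * Real.sqrt τ := mul_pos hσ (Real.sqrt_pos.mpr hτ)
  have hdiv : HasDerivAt (fun s : ℝ => s / K) (1 / K) S := by
    simpa using (hasDerivAt_id S).div_const K
  have hlog : HasDerivAt (fun s : ℝ => Real.log (s / K)) (1 / S) S := by
    have := (Real.hasDerivAt_log (x := S / K) (by positivity)).comp S hdiv
    exact this.congr_deriv (by field_simp)
  have hd1 : HasDerivAt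
      (fun s : ℝ => (Real.log (s / K) + (r + σ ^ 2 / 2) * τ) / (σ * Real.sqrt τ))
      ((1 / S) / (σ * Real.sqrt τ)) S :=
    ((hlog.add_const _).div_const _)
  have := (stdNormalCDF_hasDerivAt
      ((Real.log (S / K) + (r + σ ^ 2 / 2) * τ) / (σ * Real.sqrt τ))).comp S hd1
  exact this.congr_deriv (by rw [div_div, mul_one_div, mul_assoc])
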